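/- arXiv:2209.07724 — 4 statements merged into one kernel-verified Lean document; each statement's English description precedes it below -/
import Mathlib

section
/- Let x/a and y/b be positive Farey neighbors (ay - bx = 1) with a ≥ 1. If a > 1 then ⌈(x+y)/(a+b)⌉ = ⌈x/a⌉, and if a = 1 then ⌈(x+y)/(a+b)⌉ = ⌈x/a⌉ + 1. In both cases ⌈(x+y)/(a+b)⌉ = ⌊x/a + 1⌋. -/
/-- For positive Farey neighbors `x/a`, `y/b` (with `ay - bx = 1`): if `a > 1` then
`⌈(x+y)/(a+b)⌉ = ⌈x/a⌉`, if `a = 1` then `⌈(x+y)/(a+b)⌉ = ⌈x/a⌉ + 1`, and in both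
cases `⌈(x+y)/(a+b)⌉ = ⌊x/a + 1⌋`. -/
theorem farey_sum_ceil (x a y b : ℕ) (hx : 0 < x) (hy : 0 < y) (ha : 1 ≤ a) (hb : 0 < b)
    (h : a * y = b * x + 1) :
    ((1 < a → ⌈((x : ℚ) + y) / ((a : ℚ) + b)⌉ = ⌈(x : ℚ) / a⌉) ∧
      (a = 1 → ⌈((x : ℚ) + y) / ((a : ℚ) + b)⌉ = ⌈(x : ℚ) / a⌉ + 1)) ∧
    ⌈((x : ℚ) + y) / ((a : ℚ) + b)⌉ = ⌊(x : ℚ) / a + 1⌋ := by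
  set q := x / a with hqdef
  have hxeq : a * q + x % a = x := Nat.div_add_mod x a
  have hr : x % a < a := Nat.mod_lt x (by omega)
  have hq : a * q ≤ x := by omega
  have hq2 : x + 1 ≤ a * (q + 1) := by
    have : a * (q + 1) = a * q + a := by ring
    omega
  have key : a * (x + y) = x * (a + b) + 1 := by
    rw [Nat.mul_add, h]; ring
  have hden : (0 : ℚ) < (a : ℚ) + b := by positivity
  have ha0 : (0 : ℚ) < (a : ℚ) := by exact_mod_cast ha
  have k1 : q * (a + b) < x + y := by
    apply Nat.lt_of_mul_lt_mul_left (a := a)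
    calc a * (q * (a + b)) = (a * q) * (a + b) := (mul_assoc _ _ _).symm
      _ ≤ x * (a + b) := Nat.mul_le_mul_right _ hq
      _ < x * (a + b) + 1 := Nat.lt_succ_self _
      _ = a * (x + y) := key.symm
  have k2 : x + y ≤ (q + 1) * (a + b) := by
    apply Nat.le_of_mul_le_mul_left ?_ (show 0 < a by omega)
    calc a * (x + y) = x * (a + b) + 1 := key
      _ ≤ (x + 1) * (a + b) := by nlinarith
      _ ≤ (a * (q + 1)) * (a + b) := Nat.mul_le_mul_right _ hq2
      _ = a * ((q + 1) * (a + b)) := mul_assoc _ _ _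
  have hceil : ⌈((x : ℚ) + y) / ((a : ℚ) + b)⌉ = (q : ℤ) + 1 := by
    rw [Int.ceil_eq_iff]
    constructor
    · rw [lt_div_iff₀ hden]
      push_cast
      have : (q : ℚ) * ((a : ℚ) + b) < (x : ℚ) + y := by exact_mod_cast k1
      nlinarith
    · rw [div_le_iff₀ hden]
      push_cast
      have : (x : ℚ) + y ≤ ((q : ℚ) + 1) * ((a : ℚ) + b) := by exact_mod_cast k2
      linarith
  have hfloor : ⌊(x : ℚ) / a + 1⌋ = (q : ℤ) + 1 := by
    rw [Int.floor_eq_iff]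
    constructor
    · push_cast
      have hle : (q : ℚ) ≤ x / a := by
        rw [le_div_iff₀ ha0]
        exact_mod_cast Nat.div_mul_le_self x a
      linarith
    · push_cast
      have : (x : ℚ) / a < q + 1 := by
        rw [div_lt_iff₀ ha0]
        have h' : (x : ℕ) < (q + 1) * a := by
          have : (q + 1) * a = a * (q + 1) := by ring
          omega
        exact_mod_cast h'
      linarith
  refine ⟨⟨fun h1 => ?_, fun h1 => ?_⟩, by rw [hceil, hfloor]⟩
  · -- a > 1 : a does not divide x
    have hrne : x % a ≠ 0 := by
      intro h0
      have hxq : x = a * q := by omega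
      have hd1 : a ∣ b * x := ⟨b * q, by rw [hxq]; ring⟩
      have hd2 : a ∣ b * x + 1 := h ▸ dvd_mul_right a y
      have : a ∣ 1 := (Nat.dvd_add_right hd1).mp hd2
      have ha1 : a = 1 := Nat.dvd_one.mp this
      omega
    have hceilx : ⌈(x : ℚ) / a⌉ = (q : ℤ) + 1 := by
      rw [Int.ceil_eq_iff]
      constructor
      · push_cast
        rw [lt_div_iff₀ ha0]
        have : q * a < x := by
          have : q * a = a * q := by ring
          omega
        have h' : (q : ℚ) * a < x := by exact_mod_cast this
        linarith
      · push_cast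
        rw [div_le_iff₀ ha0]
        have h' : x ≤ (q + 1) * a := by
          have : (q + 1) * a = a * (q + 1) := by ring
          omega
        exact_mod_cast h'
    rw [hceil, hceilx]
  · subst h1
    have hqx : q = x := by simp [hqdef]
    rw [hceil, hqx]
    norm_num
end

section
/- For any pair (a, x) of coprime integers with 1 ≤ a ≤ x, the degree of (x - a, a)_q equals the degree of (a, x)_q minus 1 (when x > a). -/
open Polynomial

/-- The `q`-integer `[c]_q = 1 + q + ⋯ + q^{c-1}` as a polynomial in `ℤ[q]`. -/
noncomputable def qInt (c : ℕ) : Polynomial ℤ := ∑ i ∈ Finset.range c, X ^ i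

/-- The polynomial `(a, b)_q ∈ ℤ[q]` associated to a pair of coprime positive
integers: `(1, n)_q = (n, 1)_q = [n+1]_q`; if `a < b` then
`(a,b)_q = (a-r, r)_q + q·(a, b-a)_q` with `r = b % a`; if `a > b` then
`(a,b)_q = (a-b, b)_q + q^⌈a/b⌉·(r, b-r)_q` with `r = a % b`.
(Values on non-coprime or zero inputs are junk.) -/
noncomputable def W : ℕ → ℕ → Polynomial ℤ
  | 1, b => qInt (b + 1)
  | a, 1 => qInt (a + 1)
  | 0, _ => 0
  | _, 0 => 0
  | a + 2, b + 2 =>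
    if a < b then
      W (a + 2 - (b + 2) % (a + 2)) ((b + 2) % (a + 2)) + X * W (a + 2) (b - a)
    else
      W (a - b) (b + 2) +
        X ^ ((a + 2 + (b + 2) - 1) / (b + 2)) *
          W ((a + 2) % (b + 2)) (b + 2 - (a + 2) % (b + 2))
  termination_by a b => a + b
  decreasing_by
  · have := Nat.mod_lt (b + 2) (show 0 < a + 2 by omega); omega
  · omega
  · omega
  · have := Nat.mod_lt (a + 2) (show 0 < b + 2 by omega); omega

/- ### Unfolding equations for `W` -/

lemma W_one_one : W 1 1 = qInt 2 := by
  delta W W._unary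
  rw [WellFounded.Nat.fix_eq]

lemma W_one_big (b : ℕ) : W 1 (b + 2) = qInt (b + 3) := by
  delta W W._unary
  rw [WellFounded.Nat.fix_eq]

lemma W_big_one (a : ℕ) : W (a + 2) 1 = qInt (a + 3) := by
  delta W W._unary
  rw [WellFounded.Nat.fix_eq]

lemma W_rec (a b : ℕ) : W (a + 2) (b + 2) = if _h : a < b then
      W (a + 2 - (b + 2) % (a + 2)) ((b + 2) % (a + 2)) + X * W (a + 2) (b - a)
    else
      W (a - b) (b + 2) +
        X ^ ((a + 2 + (b + 2) - 1) / (b + 2)) *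
          W ((a + 2) % (b + 2)) (b + 2 - (a + 2) % (b + 2)) := by
  conv_lhs => delta W W._unary
  rw [WellFounded.Nat.fix_eq]
  with_unfolding_all rfl

/- ### Sum of partial quotients -/

/-- Sum of the partial quotients of the regular continued fraction of `b/a`. -/
def S : ℕ → ℕ → ℕ
  | 0, _ => 0
  | a + 1, b => b / (a + 1) + S (b % (a + 1)) (a + 1)
  termination_by a _ => a
  decreasing_by
    exact Nat.lt_succ_of_le (Nat.le_of_lt_succ (Nat.mod_lt _ (Nat.succ_pos a)))

lemma S_zero (b : ℕ) : S 0 b = 0 := by simp [S]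

lemma S_eq (a b : ℕ) (ha : 0 < a) : S a b = b / a + S (b % a) a := by
  cases a with
  | zero => omega
  | succ a => rw [S]

lemma S_one (b : ℕ) : S 1 b = b := by
  rw [S_eq 1 b Nat.one_pos, Nat.div_one, Nat.mod_one, S_zero]
  omega

lemma S_comm_lt {a b : ℕ} (h : a < b) : S b a = S a b := by
  rcases Nat.eq_zero_or_pos a with rfl | ha
  · rw [S_zero, S_eq b 0 h, Nat.zero_div, Nat.zero_mod, S_zero]
  · rw [S_eq b a (by omega), Nat.div_eq_of_lt h, Nat.mod_eq_of_lt h]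
    omega

lemma S_comm (a b : ℕ) : S a b = S b a := by
  rcases Nat.lt_trichotomy a b with h | rfl | h
  · exact (S_comm_lt h).symm
  · rfl
  · exact S_comm_lt h

lemma S_sub {a b : ℕ} (h0 : 0 < a) (h : a < b) : S a b = S a (b - a) + 1 := by
  rw [S_eq a b h0, S_eq a (b - a) h0, Nat.div_eq_sub_div h0 h.le,
    Nat.mod_eq_sub_mod h.le]
  omega

/- ### `qInt` facts -/

lemma qInt_coeff (c k : ℕ) : (qInt c).coeff k = if k < c then 1 else 0 := by
  simp only [qInt, finset_sum_coeff, coeff_X_pow]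
  rw [Finset.sum_ite_eq (Finset.range c) k (fun _ => (1 : ℤ))]
  simp [Finset.mem_range]

lemma qInt_good (c : ℕ) :
    (∀ k, 0 ≤ (qInt (c + 1)).coeff k) ∧ 0 < (qInt (c + 1)).coeff c ∧
      (qInt (c + 1)).natDegree = c := by
  refine ⟨fun k => ?_, ?_, le_antisymm ?_ ?_⟩
  · rw [qInt_coeff]; split <;> norm_num
  · rw [qInt_coeff, if_pos (by omega)]; norm_num
  · rw [natDegree_le_iff_coeff_eq_zero]
    intro m hm; rw [qInt_coeff, if_neg (by omega)]
  · exact le_natDegree_of_ne_zero (by rw [qInt_coeff, if_pos (by omega)]; norm_num)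

/- ### Degree of a dominated sum -/

lemma good_add (P Q : Polynomial ℤ) (c d1 d2 N : ℕ)
    (hP1 : ∀ k, 0 ≤ P.coeff k) (hP2 : P.natDegree ≤ d1)
    (hQ1 : ∀ k, 0 ≤ Q.coeff k) (hQ2 : 0 < Q.coeff d2) (hQ3 : Q.natDegree = d2)
    (hd1 : d1 ≤ N) (hN : N = d2 + c) :
    (∀ k, 0 ≤ (P + X ^ c * Q).coeff k) ∧ 0 < (P + X ^ c * Q).coeff N ∧
      (P + X ^ c * Q).natDegree = N := by
  have hxq : ∀ k, (X ^ c * Q).coeff k = if c ≤ k then Q.coeff (k - c) else 0 := by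
    intro k; rw [mul_comm, Polynomial.coeff_mul_X_pow']
  have h1 : ∀ k, 0 ≤ (P + X ^ c * Q).coeff k := by
    intro k
    rw [coeff_add, hxq]
    split
    · exact add_nonneg (hP1 k) (hQ1 _)
    · simpa using hP1 k
  have h2 : 0 < (P + X ^ c * Q).coeff N := by
    rw [coeff_add, hxq, if_pos (by omega), show N - c = d2 by omega]
    exact add_pos_of_nonneg_of_pos (hP1 N) hQ2
  refine ⟨h1, h2, le_antisymm ?_ (le_natDegree_of_ne_zero h2.ne')⟩
  refine (natDegree_add_le _ _).trans (max_le (hP2.trans hd1) ?_)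
  calc (X ^ c * Q).natDegree ≤ (X ^ c : Polynomial ℤ).natDegree + Q.natDegree :=
        natDegree_mul_le
    _ ≤ N := by rw [natDegree_X_pow, hQ3]; omega

lemma ceil_div (a b : ℕ) (hb : 0 < b) (hr : 0 < a % b) :
    (a + b - 1) / b = a / b + 1 := by
  have h := Nat.div_add_mod a b
  have hlt := Nat.mod_lt a hb
  have key : (a % b - 1 + b * (a / b + 1)) / b = (a % b - 1) / b + (a / b + 1) :=
    Nat.add_mul_div_left _ _ hb
  have e : a + b - 1 = a % b - 1 + b * (a / b + 1) := by
    rw [Nat.mul_succ]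
    omega
  rw [e, key, Nat.div_eq_of_lt (by omega)]
  omega

/- ### Main induction -/

lemma W_good (n : ℕ) : ∀ a b : ℕ, a + b ≤ n → Nat.Coprime a b → 1 ≤ a → 1 ≤ b →
    (∀ k, 0 ≤ (W a b).coeff k) ∧ 0 < (W a b).coeff (S a b) ∧
      (W a b).natDegree = S a b := by
  induction n with
  | zero => intro a b h ha hb; omega
  | succ n ih =>
    intro a b hn hco ha hb
    rcases a with _ | _ | a
    · omega
    · rcases b with _ | _ | b
      · omega
      · rw [W_one_one, show S 1 1 = 1 from S_one 1]
        exact qInt_good 1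
      · rw [show b + 1 + 1 = b + 2 from rfl] at *
        rw [W_one_big, show S 1 (b + 2) = b + 2 from S_one _]
        exact qInt_good (b + 2)
    · rcases b with _ | _ | b
      · omega
      · rw [show a + 1 + 1 = a + 2 from rfl] at *
        have hS : S (a + 2) 1 = a + 2 := by
          rw [S_eq _ _ (by omega), Nat.div_eq_of_lt (by omega),
            Nat.mod_eq_of_lt (by omega), S_one]
          omega
        rw [W_big_one, hS]
        exact qInt_good (a + 2)
      · -- main case: both ≥ 2
        rw [show a + 1 + 1 = a + 2 from rfl, show b + 1 + 1 = b + 2 from rfl] at *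
        rw [W_rec]
        by_cases h : a < b
        · rw [dif_pos h, show b - a = b + 2 - (a + 2) by omega]
          have hr : 0 < (b + 2) % (a + 2) := by
            rcases Nat.eq_zero_or_pos ((b + 2) % (a + 2)) with h0 | h0
            · exact absurd (hco.eq_one_of_dvd (Nat.dvd_of_mod_eq_zero h0)) (by omega)
            · exact h0
          have hrA : (b + 2) % (a + 2) < a + 2 := Nat.mod_lt _ (by omega)
          have hcop_rA : Nat.Coprime ((b + 2) % (a + 2)) (a + 2) := by
            have h' := (Nat.gcd_rec (a + 2) (b + 2)).symm
            unfold Nat.Coprime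
            rw [h']
            exact hco
          have hcop1 : Nat.Coprime (a + 2 - (b + 2) % (a + 2)) ((b + 2) % (a + 2)) :=
            (Nat.coprime_sub_self_left hrA.le).mpr hcop_rA.symm
          have hcop2 : Nat.Coprime (a + 2) (b + 2 - (a + 2)) :=
            (Nat.coprime_sub_self_right (by omega)).mpr hco
          obtain ⟨hP1, hP2, hP3⟩ :=
            ih (a + 2 - (b + 2) % (a + 2)) ((b + 2) % (a + 2)) (by omega) hcop1
              (by omega) (by omega)
          obtain ⟨hQ1, hQ2, hQ3⟩ :=
            ih (a + 2) (b + 2 - (a + 2)) (by omega) hcop2 (by omega) (by omega)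
          have e1 : S (a + 2 - (b + 2) % (a + 2)) ((b + 2) % (a + 2)) =
              S ((b + 2) % (a + 2)) (a + 2 - (b + 2) % (a + 2)) := S_comm _ _
          have e2 : S ((b + 2) % (a + 2)) (a + 2) =
              S ((b + 2) % (a + 2)) (a + 2 - (b + 2) % (a + 2)) + 1 := S_sub hr hrA
          have e3 : S (a + 2) (b + 2) = (b + 2) / (a + 2) + S ((b + 2) % (a + 2)) (a + 2) :=
            S_eq _ _ (by omega)
          have e4 : S (a + 2) (b + 2) = S (a + 2) (b + 2 - (a + 2)) + 1 :=
            S_sub (by omega) (by omega)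
          have e5 : 1 ≤ (b + 2) / (a + 2) := (Nat.one_le_div_iff (by omega)).mpr (by omega)
          rw [show (X : Polynomial ℤ) * W (a + 2) (b + 2 - (a + 2)) =
              X ^ 1 * W (a + 2) (b + 2 - (a + 2)) by rw [pow_one]]
          exact good_add _ _ 1 (S (a + 2 - (b + 2) % (a + 2)) ((b + 2) % (a + 2)))
            (S (a + 2) (b + 2 - (a + 2))) (S (a + 2) (b + 2))
            hP1 hP3.le hQ1 hQ2 hQ3 (by omega) (by omega)
        · rw [dif_neg h, show a - b = a + 2 - (b + 2) by omega]
          have hne : a + 2 ≠ b + 2 := by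
            intro hEq
            exact absurd (hco.eq_one_of_dvd (hEq ▸ dvd_refl (a + 2))) (by omega)
          have hBA : b + 2 < a + 2 := by omega
          have hr : 0 < (a + 2) % (b + 2) := by
            rcases Nat.eq_zero_or_pos ((a + 2) % (b + 2)) with h0 | h0
            · exact absurd (hco.symm.eq_one_of_dvd (Nat.dvd_of_mod_eq_zero h0)) (by omega)
            · exact h0
          have hrB : (a + 2) % (b + 2) < b + 2 := Nat.mod_lt _ (by omega)
          have hcop_rB : Nat.Coprime ((a + 2) % (b + 2)) (b + 2) := by
            have h' := (Nat.gcd_rec (b + 2) (a + 2)).symm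
            unfold Nat.Coprime
            rw [h']
            exact hco.symm
          have hcop1 : Nat.Coprime (a + 2 - (b + 2)) (b + 2) :=
            (Nat.coprime_sub_self_left hBA.le).mpr hco
          have hcop2 : Nat.Coprime ((a + 2) % (b + 2)) (b + 2 - (a + 2) % (b + 2)) :=
            (Nat.coprime_sub_self_right hrB.le).mpr hcop_rB
          obtain ⟨hP1, hP2, hP3⟩ :=
            ih (a + 2 - (b + 2)) (b + 2) (by omega) hcop1 (by omega) (by omega)
          obtain ⟨hQ1, hQ2, hQ3⟩ :=
            ih ((a + 2) % (b + 2)) (b + 2 - (a + 2) % (b + 2)) (by omega) hcop2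
              (by omega) (by omega)
          have e0 : S (a + 2) (b + 2) = S (b + 2) (a + 2) := S_comm _ _
          have e1 : S (b + 2) (a + 2) = (a + 2) / (b + 2) + S ((a + 2) % (b + 2)) (b + 2) :=
            S_eq _ _ (by omega)
          have e2 : S ((a + 2) % (b + 2)) (b + 2) =
              S ((a + 2) % (b + 2)) (b + 2 - (a + 2) % (b + 2)) + 1 := S_sub hr hrB
          have e3 : S (b + 2) (a + 2) = S (b + 2) (a + 2 - (b + 2)) + 1 :=
            S_sub (by omega) hBA
          have e4 : S (a + 2 - (b + 2)) (b + 2) = S (b + 2) (a + 2 - (b + 2)) := S_comm _ _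
          have e5 : 1 ≤ (a + 2) / (b + 2) := (Nat.one_le_div_iff (by omega)).mpr hBA.le
          have hc : (a + 2 + (b + 2) - 1) / (b + 2) = (a + 2) / (b + 2) + 1 :=
            ceil_div (a + 2) (b + 2) (by omega) hr
          rw [hc]
          exact good_add _ _ ((a + 2) / (b + 2) + 1) (S (a + 2 - (b + 2)) (b + 2))
            (S ((a + 2) % (b + 2)) (b + 2 - (a + 2) % (b + 2))) (S (a + 2) (b + 2))
            hP1 hP3.le hQ1 hQ2 hQ3 (by omega) (by omega)


/-- The sequence of digits of the negative continued fraction expansion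
`x/a = [c₁, …, c_l]⁻` (each `cᵢ = ⌈·⌉` of the current fraction). By convention
`ncfDigits x 0 = []` (for `1/0 = ∞`) and `ncfDigits x 1 = [x]`. -/
def ncfDigits : ℕ → ℕ → List ℕ
  | _, 0 => []
  | x, 1 => [x]
  | x, a + 2 =>
      (x + (a + 2) - 1) / (a + 2) ::
        ncfDigits (a + 2) ((x + (a + 2) - 1) / (a + 2) * (a + 2) - x)
  termination_by x a => a
  decreasing_by
    have := Nat.div_mul_le_self (x + (a + 2) - 1) (a + 2); omega

/-- The (coprime) numerator and denominator of the Morier-Genoud–Ovsienko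
`q`-deformation of the negative continued fraction `[c₁, …, c_l]⁻`, computed by
the continuant recursion `(N, D) ↦ ([c]_q·N - q^{c-1}·D, N)`, with `(1, 0)` for
the empty list. -/
noncomputable def qCF : List ℕ → Polynomial ℤ × Polynomial ℤ
  | [] => (1, 0)
  | c :: rest =>
      let p := qCF rest
      (qInt c * p.1 - X ^ (c - 1) * p.2, p.1)

/-- Numerator `N_q(x/a)` of the Morier-Genoud–Ovsienko `q`-rational `[x/a]_q`. -/
noncomputable def Nq (x a : ℕ) : Polynomial ℤ := (qCF (ncfDigits x a)).1

/-- Denominator `D_q(x/a)` of the Morier-Genoud–Ovsienko `q`-rational `[x/a]_q`. -/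
noncomputable def Dq (x a : ℕ) : Polynomial ℤ := (qCF (ncfDigits x a)).2

/-- The normalized Jones polynomial `J_{x/a}(q) = q·N_q(x/a) + (1-q)·D_q(x/a)`. -/
noncomputable def Jq (x a : ℕ) : Polynomial ℤ := X * Nq x a + (1 - X) * Dq x a

/-- For coprime `1 ≤ a ≤ x` with `x > a`: `deg (x-a, a)_q = deg (a, x)_q - 1`. -/
theorem W_natDegree_pred (a x : ℕ) (hco : Nat.Coprime a x) (ha : 1 ≤ a) (hax : a < x) :
    (W (x - a) a).natDegree + 1 = (W a x).natDegree := by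
  have hcop1 : Nat.Coprime (x - a) a :=
    (Nat.coprime_sub_self_left hax.le).mpr hco.symm
  obtain ⟨_, _, hd1⟩ := W_good (x - a + a) (x - a) a le_rfl hcop1 (by omega) ha
  obtain ⟨_, _, hd2⟩ := W_good (a + x) a x le_rfl hco ha (by omega)
  have e1 : S a x = S a (x - a) + 1 := S_sub (by omega) hax
  have e2 : S (x - a) a = S a (x - a) := S_comm _ _
  omega
end

section
/- Let (a, x) and (b, y) be pairs of coprime integers with 1 ≤ a ≤ x, 1 ≤ b ≤ y, and ay - bx = 1. Then deg (a+b, x+y)_q = deg (a, x)_q + ⌊b/a + 1⌋. -/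
open Polynomial

/-! ### Auxiliary development for the main theorem -/

/-- Sum of the regular continued fraction digits of `a / b` (symmetric junk
convention: `dd a b = dd b a`, `dd a 0 = 0`). -/
def dd (a b : ℕ) : ℕ :=
  if _h : b = 0 then 0
  else if _h2 : a < b then dd b a
  else a / b + dd b (a % b)
termination_by 2 * (a + b) + (if a < b then 1 else 0)
decreasing_by
  · split_ifs <;> omega
  · have := Nat.mod_lt a (show 0 < b by omega)
    split_ifs <;> omega

lemma dd_zero (a : ℕ) : dd a 0 = 0 := by rw [dd]; simp

lemma dd_step {a b : ℕ} (hb : 1 ≤ b) (hba : b ≤ a) : dd a b = a / b + dd b (a % b) := by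
  rw [dd]; rw [dif_neg (by omega), dif_neg (by omega)]

lemma dd_comm (a b : ℕ) : dd a b = dd b a := by
  rcases lt_trichotomy a b with h | h | h
  · rw [dd]; rw [dif_neg (by omega), dif_pos h]
  · rw [h]
  · conv_rhs => rw [dd]
    rw [dif_neg (by omega), dif_pos h]

lemma dd_one_right {a : ℕ} (ha : 1 ≤ a) : dd a 1 = a := by
  rw [dd_step le_rfl ha]
  simp [Nat.mod_one, dd_zero]

lemma dd_one_left {b : ℕ} (hb : 1 ≤ b) : dd 1 b = b := by
  rw [dd_comm]; exact dd_one_right hb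

/-- Removing one CF step: `dd a b = dd (a - b) b + 1` for `1 ≤ b < a`. -/
lemma dd_sub {a b : ℕ} (hb : 1 ≤ b) (hba : b < a) : dd a b = dd (a - b) b + 1 := by
  have hq := Nat.div_add_mod a b
  set q := a / b with hqdef
  set r := a % b with hrdef
  have hr : r < b := Nat.mod_lt a (by omega)
  have hq1 : 1 ≤ q := by
    rw [hqdef]
    exact (Nat.one_le_div_iff (by omega)).mpr (by omega)
  rcases eq_or_lt_of_le hq1 with h1 | h2
  · have hab : a - b = r := by
      have : b * q = b := by rw [← h1]; ring
      omega
    rw [dd_step hb (by omega), hab, dd_comm r b, ← hqdef, ← hrdef, ← h1]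
    omega
  · have hbq : b * q = b * (q - 1) + b := by
      have : q - 1 + 1 = q := by omega
      calc b * q = b * (q - 1 + 1) := by rw [this]
      _ = b * (q - 1) + b := by ring
    set t := b * (q - 1) with htdef
    have hab : a - b = r + t := by omega
    have htb : b ≤ t := by
      have : 1 * b ≤ (q-1) * b := Nat.mul_le_mul_right b (by omega)
      have h2 : (q-1)*b = t := by rw [htdef]; ring
      omega
    rw [dd_step hb (by omega), dd_step hb (by omega), hab]
    have hdiv : (r + t) / b = q - 1 := by
      rw [htdef, Nat.add_mul_div_left _ _ (show 0 < b by omega), Nat.div_eq_of_lt hr]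
      omega
    have hmod : (r + t) % b = r := by
      rw [htdef, Nat.add_mul_mod_self_left, Nat.mod_eq_of_lt hr]
    rw [hdiv, hmod, ← hqdef, ← hrdef]
    omega

/-- Positivity/degree data for a polynomial: nonneg coefficients, positive
coefficient at `m`, zero above `m`. -/
def Nice (P : Polynomial ℤ) (m : ℕ) : Prop :=
  (∀ i, 0 ≤ P.coeff i) ∧ 0 < P.coeff m ∧ ∀ i, m < i → P.coeff i = 0

lemma nice_natDegree {P : Polynomial ℤ} {m : ℕ} (h : Nice P m) : P.natDegree = m := by
  obtain ⟨h1, h2, h3⟩ := h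
  apply le_antisymm
  · exact Polynomial.natDegree_le_iff_coeff_eq_zero.mpr (fun i hi => h3 i hi)
  · exact Polynomial.le_natDegree_of_ne_zero (by omega)

lemma nice_add {P Q : Polynomial ℤ} {m n : ℕ} (hP : Nice P m) (hQ : Nice Q n) :
    Nice (P + Q) (max m n) := by
  obtain ⟨p1, p2, p3⟩ := hP
  obtain ⟨q1, q2, q3⟩ := hQ
  refine ⟨fun i => by simp only [Polynomial.coeff_add]; have := p1 i; have := q1 i; omega,
    ?_, ?_⟩
  · simp only [Polynomial.coeff_add]
    rcases le_total m n with h | h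
    · rw [max_eq_right h]; have := p1 n; omega
    · rw [max_eq_left h]; have := q1 m; omega
  · intro i hi
    simp only [Polynomial.coeff_add]
    rw [p3 i (by omega), q3 i (by omega)]; ring

lemma nice_shift {P : Polynomial ℤ} {m : ℕ} (hP : Nice P m) (c : ℕ) :
    Nice (Polynomial.X ^ c * P) (c + m) := by
  obtain ⟨p1, p2, p3⟩ := hP
  have key : ∀ i, (Polynomial.X ^ c * P).coeff i = if c ≤ i then P.coeff (i - c) else 0 := by
    intro i
    rw [show (Polynomial.X : Polynomial ℤ) ^ c * P = P * Polynomial.X ^ c from mul_comm _ _,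
      Polynomial.coeff_mul_X_pow']
  refine ⟨fun i => ?_, ?_, fun i hi => ?_⟩
  · rw [key]; split_ifs with h
    · exact p1 _
    · exact le_refl 0
  · rw [key, if_pos (by omega)]
    simpa using p2
  · rw [key]; split_ifs with h
    · exact p3 _ (by omega)
    · rfl

lemma nice_X_mul {P : Polynomial ℤ} {m : ℕ} (hP : Nice P m) :
    Nice (Polynomial.X * P) (1 + m) := by
  have := nice_shift hP 1
  rwa [pow_one] at this

lemma nice_qInt (c : ℕ) : Nice (qInt (c + 1)) c := by
  have key : ∀ k, (qInt (c+1)).coeff k = if k < c + 1 then 1 else 0 := by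
    intro k
    rw [qInt, Polynomial.finset_sum_coeff]
    simp only [Polynomial.coeff_X_pow]
    rw [Finset.sum_ite_eq (Finset.range (c+1)) k (fun _ => (1:ℤ))]
    simp [Finset.mem_range]
  refine ⟨fun i => by rw [key]; split_ifs <;> norm_num, by rw [key]; simp,
    fun i hi => by rw [key, if_neg (by omega)]⟩

lemma W_one (b : ℕ) : W 1 b = qInt (b+1) := by
  match b with
  | 0 => delta W W._unary; rw [WellFounded.Nat.fix_eq]
  | 1 => delta W W._unary; rw [WellFounded.Nat.fix_eq]
  | (b+2) => delta W W._unary; rw [WellFounded.Nat.fix_eq]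

lemma W_one' (a : ℕ) : W (a+2) 1 = qInt (a+2+1) := by
  delta W W._unary
  rw [WellFounded.Nat.fix_eq]

lemma W_two (a b : ℕ) : W (a+2) (b+2) = (if a < b then
      W (a + 2 - (b + 2) % (a + 2)) ((b + 2) % (a + 2)) + Polynomial.X * W (a + 2) (b - a)
    else
      W (a - b) (b + 2) +
        Polynomial.X ^ ((a + 2 + (b + 2) - 1) / (b + 2)) *
          W ((a + 2) % (b + 2)) (b + 2 - (a + 2) % (b + 2))) := by
  delta W W._unary
  rw [WellFounded.Nat.fix_eq]
  rfl

lemma cop_mod {a b : ℕ} (ha : 0 < a) (h : Nat.Coprime a b) : Nat.Coprime a (b % a) := by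
  have h1 : Nat.gcd (b % a) a = 1 := by rw [← Nat.gcd_rec]; exact h
  exact Nat.Coprime.symm h1

/-- Main degree lemma: for coprime positive `a b`, `W a b` has nonnegative
coefficients and (nat)degree `dd a b`. -/
lemma W_nice : ∀ n a b, a + b ≤ n → 1 ≤ a → 1 ≤ b → Nat.Coprime a b →
    Nice (W a b) (dd a b) := by
  intro n
  induction n with
  | zero => intro a b hn ha hb _; exfalso; omega
  | succ n ih =>
    intro a b hn ha hb hcop
    rcases Nat.lt_or_ge a 2 with h2 | h2
    · -- a = 1
      have ha1 : a = 1 := by omega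
      subst ha1
      rw [W_one, dd_one_left hb]
      exact nice_qInt b
    · obtain ⟨a', rfl⟩ : ∃ a', a = a' + 2 := ⟨a - 2, by omega⟩
      rcases Nat.lt_or_ge b 2 with hb2 | hb2
      · have hb1 : b = 1 := by omega
        subst hb1
        rw [W_one', dd_one_right (by omega)]
        exact nice_qInt (a' + 2)
      · obtain ⟨b', rfl⟩ : ∃ b', b = b' + 2 := ⟨b - 2, by omega⟩
        rcases Nat.lt_or_ge a' b' with hab | hab
        · -- a < b branch
          rw [W_two, if_pos hab]
          have hrlt : (b'+2) % (a'+2) < a'+2 := Nat.mod_lt (b'+2) (by omega)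
          have hr1 : 1 ≤ (b'+2) % (a'+2) := by
            rcases Nat.eq_zero_or_pos ((b'+2) % (a'+2)) with h0 | h0
            · exfalso
              have hdvd : (a'+2) ∣ (b'+2) := Nat.dvd_of_mod_eq_zero h0
              have h3 := Nat.gcd_eq_left hdvd
              have h4 := hcop.gcd_eq_one
              omega
            · exact h0
          have hc1 : Nat.Coprime (a'+2 - (b'+2) % (a'+2)) ((b'+2) % (a'+2)) :=
            (Nat.coprime_sub_self_left (le_of_lt hrlt)).mpr (cop_mod (by omega) hcop)
          have hc2 : Nat.Coprime (a'+2) (b'+2 - (a'+2)) :=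
            (Nat.coprime_sub_self_right (by omega)).mpr hcop
          have N1 := ih (a'+2 - (b'+2) % (a'+2)) ((b'+2) % (a'+2))
            (by omega) (by omega) hr1 hc1
          have N2 := ih (a'+2) (b'+2 - (a'+2)) (by omega) (by omega) (by omega) hc2
          have e : b' - a' = b'+2 - (a'+2) := by omega
          rw [e]
          have H := nice_add N1 (nice_X_mul N2)
          have e1 : dd (a'+2) ((b'+2) % (a'+2))
              = dd (a'+2 - (b'+2) % (a'+2)) ((b'+2) % (a'+2)) + 1 := dd_sub hr1 hrlt
          have e2 : dd (b'+2) (a'+2) = dd (b'+2 - (a'+2)) (a'+2) + 1 :=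
            dd_sub (by omega) (by omega)
          have e3 : dd (a'+2) (b'+2) = (b'+2)/(a'+2) + dd (a'+2) ((b'+2) % (a'+2)) := by
            rw [dd_comm]; exact dd_step (by omega) (by omega)
          have e4 : dd (a'+2) (b'+2 - (a'+2)) = dd (b'+2 - (a'+2)) (a'+2) := dd_comm _ _
          have e5 : 1 ≤ (b'+2)/(a'+2) := (Nat.one_le_div_iff (by omega)).mpr (by omega)
          have e6 : dd (b'+2) (a'+2) = dd (a'+2) (b'+2) := dd_comm _ _
          have hmax : max (dd (a'+2 - (b'+2) % (a'+2)) ((b'+2) % (a'+2)))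
              (1 + dd (a'+2) (b'+2 - (a'+2))) = dd (a'+2) (b'+2) := by
            rw [Nat.max_def]; split_ifs <;> omega
          rwa [hmax] at H
        · -- b ≤ a branch
          have hne : b' < a' := by
            rcases Nat.lt_or_ge b' a' with h | h
            · exact h
            · exfalso
              have : a' = b' := by omega
              subst this
              have h4 := hcop.gcd_eq_one
              rw [Nat.gcd_self] at h4
              omega
          rw [W_two, if_neg (by omega)]
          have hrlt : (a'+2) % (b'+2) < b'+2 := Nat.mod_lt (a'+2) (by omega)
          have hr1 : 1 ≤ (a'+2) % (b'+2) := by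
            rcases Nat.eq_zero_or_pos ((a'+2) % (b'+2)) with h0 | h0
            · exfalso
              have hdvd : (b'+2) ∣ (a'+2) := Nat.dvd_of_mod_eq_zero h0
              have h3 := Nat.gcd_eq_left hdvd
              have h4 := hcop.symm.gcd_eq_one
              omega
            · exact h0
          have hc1 : Nat.Coprime (a'+2 - (b'+2)) (b'+2) :=
            (Nat.coprime_sub_self_left (by omega)).mpr hcop
          have hc2 : Nat.Coprime ((a'+2) % (b'+2)) (b'+2 - (a'+2) % (b'+2)) :=
            (Nat.coprime_sub_self_right (le_of_lt hrlt)).mpr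
              (cop_mod (by omega) hcop.symm).symm
          have N1 := ih (a'+2 - (b'+2)) (b'+2) (by omega) (by omega) (by omega) hc1
          have N2 := ih ((a'+2) % (b'+2)) (b'+2 - (a'+2) % (b'+2))
            (by omega) hr1 (by omega) hc2
          have e : a' - b' = a'+2 - (b'+2) := by omega
          rw [e]
          have H := nice_add N1 (nice_shift N2 ((a'+2+(b'+2)-1)/(b'+2)))
          have e1 : dd (a'+2) (b'+2) = dd (a'+2 - (b'+2)) (b'+2) + 1 :=
            dd_sub (by omega) (by omega)
          have e2 : dd (b'+2) ((a'+2) % (b'+2))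
              = dd (b'+2 - (a'+2) % (b'+2)) ((a'+2) % (b'+2)) + 1 := dd_sub hr1 hrlt
          have e3 : dd (a'+2) (b'+2) = (a'+2)/(b'+2) + dd (b'+2) ((a'+2) % (b'+2)) :=
            dd_step (by omega) (by omega)
          have e4 : dd ((a'+2) % (b'+2)) (b'+2 - (a'+2) % (b'+2))
              = dd (b'+2 - (a'+2) % (b'+2)) ((a'+2) % (b'+2)) := dd_comm _ _
          have hq := Nat.div_add_mod (a'+2) (b'+2)
          have hc : (a'+2+(b'+2)-1)/(b'+2) = (a'+2)/(b'+2) + 1 := by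
            apply Nat.div_eq_of_lt_le
            · have e : ((a'+2)/(b'+2)+1)*(b'+2) = (b'+2)*((a'+2)/(b'+2)) + (b'+2) := by ring
              omega
            · have e : ((a'+2)/(b'+2)+1+1)*(b'+2) = (b'+2)*((a'+2)/(b'+2)) + 2*(b'+2) := by
                ring
              omega
          have hmax : max (dd (a'+2 - (b'+2)) (b'+2))
              ((a'+2+(b'+2)-1)/(b'+2) + dd ((a'+2) % (b'+2)) (b'+2 - (a'+2) % (b'+2)))
              = dd (a'+2) (b'+2) := by
            rw [Nat.max_def]; split_ifs <;> omega
          rwa [hmax] at H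

/-- The mediant identities for the CF-digit sum, for Farey neighbors. -/
lemma med_d : ∀ n a x b y, a + x + b + y ≤ n → 1 ≤ a → a ≤ x → 1 ≤ b → b ≤ y →
    a * y = b * x + 1 →
    dd (x+y) (a+b) = dd x a + b / a + 1 ∧ dd (x+y) (a+b) = dd y b + (a+b-1)/b := by
  intro n
  induction n with
  | zero => intro a x b y hn ha hax hb hby heq; exfalso; omega
  | succ n ih =>
    intro a x b y hn ha hax hb hby heq
    rcases Nat.lt_or_ge x (2*a) with hx2 | hx2
    · -- x < 2a
      rcases Nat.eq_or_lt_of_le ha with ha1 | ha2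
      · -- a = 1
        have ha1' : a = 1 := ha1.symm
        subst ha1'
        have hx1 : x = 1 := by omega
        subst hx1
        have hy : y = b + 1 := by omega
        subst hy
        have L : dd (1+(b+1)) (1+b) = b+2 := by
          have h1 := dd_sub (show 1 ≤ 1+b by omega) (show 1+b < 1+(b+1) by omega)
          have e : 1+(b+1)-(1+b) = 1 := by omega
          rw [e] at h1
          rw [h1, dd_one_left (by omega)]
          omega
        have d11 : dd 1 1 = 1 := dd_one_left le_rfl
        have dyb : dd (b+1) b = b+1 := by
          have h1 := dd_sub hb (show b < b+1 by omega)
          have e : b+1-b = 1 := by omega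
          rw [e] at h1
          rw [h1, dd_one_left hb]
        have hdb : (1+b-1)/b = 1 := by
          have e : 1+b-1 = b := by omega
          rw [e]; exact Nat.div_self (by omega)
        exact ⟨by omega, by omega⟩
      · -- 2 ≤ a, hence a < x < 2a
        have hax' : a < x := by
          rcases Nat.eq_or_lt_of_le hax with h1 | h1
          · exfalso
            have hba : b * x = x * b := Nat.mul_comm _ _
            have hxy : x * y = a * y := by rw [h1]
            have hlt : x * b < x * y := by omega
            have hyb : b < y := Nat.lt_of_mul_lt_mul_left hlt
            have e1 : x*(y-b) + x*b = x*y := by rw [← Nat.mul_add]; congr 1; omega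
            have e2 : x*(y-b) = 1 := by omega
            have h9 : x ∣ 1 := ⟨y-b, e2.symm⟩
            have := Nat.le_of_dvd one_pos h9
            omega
          · exact h1
        rcases Nat.lt_or_ge y (2*b) with hy2 | hy2
        · -- flip case : y < 2b
          have hby' : b < y := by
            by_contra hc
            push_neg at hc
            have h1 : b*a ≤ b*x := Nat.mul_le_mul le_rfl hax
            have h2 : a*y ≤ a*b := Nat.mul_le_mul le_rfl hc
            have h3 : a*b = b*a := Nat.mul_comm a b
            omega
          have heq' : (y-b)*a = (x-a)*b + 1 := by
            have e1 : (y-b)*a + b*a = y*a := by rw [← Nat.add_mul]; congr 1; omega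
            have e2 : (x-a)*b + a*b = x*b := by rw [← Nat.add_mul]; congr 1; omega
            have e3 : y*a = a*y := Nat.mul_comm y a
            have e4 : x*b = b*x := Nat.mul_comm x b
            have e5 : a*b = b*a := Nat.mul_comm a b
            omega
          have hrel : a*(y-b) = b*(x-a) + 1 := by
            have c1 : (y-b)*a = a*(y-b) := Nat.mul_comm _ _
            have c2 : (x-a)*b = b*(x-a) := Nat.mul_comm _ _
            omega
          obtain ⟨I1, I2⟩ := ih (y-b) b (x-a) a (by omega) (by omega) (by omega)
            (by omega) (by omega) heq'
          have g1 : dd (x+y) (a+b) = dd (b+a) ((y-b)+(x-a)) + 1 := by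
            have h1 := dd_sub (show 1 ≤ a+b by omega) (show a+b < x+y by omega)
            have e : x+y-(a+b) = (y-b)+(x-a) := by omega
            rw [e] at h1
            rw [h1, dd_comm ((y-b)+(x-a)) (a+b), Nat.add_comm a b]
          -- claim1
          have hq := Nat.div_add_mod b a
          have hs : b % a < a := Nat.mod_lt b (by omega)
          have e1 : b*(x-a) = a*((b/a)*(x-a)) + (b%a)*(x-a) := by
            calc b*(x-a) = (a*(b/a) + b%a)*(x-a) := by rw [hq]
              _ = a*((b/a)*(x-a)) + (b%a)*(x-a) := by ring
          have hlow : (b/a)*(x-a) < y - b := by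
            apply Nat.lt_of_mul_lt_mul_left (a := a)
            omega
          have hupp : y - b ≤ (b/a)*(x-a) + (x-a) := by
            refine Nat.le_of_mul_le_mul_left ?_ (show 0 < a by omega)
            have e2 : a*((b/a)*(x-a) + (x-a)) = a*((b/a)*(x-a)) + a*(x-a) := by ring
            have e3 : (b%a)*(x-a) + (x-a) ≤ a*(x-a) := by
              have h4 : (b%a+1)*(x-a) ≤ a*(x-a) := Nat.mul_le_mul (by omega) le_rfl
              have e5 : (b%a+1)*(x-a) = (b%a)*(x-a) + (x-a) := by ring
              omega
            omega
          have claim1 : ((y-b)+(x-a)-1)/(x-a) = b/a + 1 := by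
            apply Nat.div_eq_of_lt_le
            · have e : (b/a+1)*(x-a) = (b/a)*(x-a) + (x-a) := by ring
              omega
            · have e : (b/a+1+1)*(x-a) = (b/a)*(x-a) + 2*(x-a) := by ring
              omega
          -- claim2
          have hb2 : 2 ≤ b := by omega
          have hp := Nat.div_add_mod a b
          have hpm : a % b < b := Nat.mod_lt a (by omega)
          have ht1 : 1 ≤ a % b := by
            by_contra hc
            push_neg at hc
            have h0 : a % b = 0 := by omega
            obtain ⟨k, hk⟩ := Nat.dvd_of_mod_eq_zero h0
            have h1 : b*(k*y) = b*x + 1 := by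
              have hh : a*y = b*k*y := by rw [hk]
              have e : b*k*y = b*(k*y) := by ring
              omega
            have h2 : b*x < b*(k*y) := by omega
            have h3 : x < k*y := Nat.lt_of_mul_lt_mul_left h2
            have h4 : b*(k*y - x) + b*x = b*(k*y) := by rw [← Nat.mul_add]; congr 1; omega
            have h5 : b ∣ 1 := ⟨k*y - x, by omega⟩
            have := Nat.le_of_dvd one_pos h5
            omega
          have claim2a : (a+b-1)/b = a/b + 1 := by
            apply Nat.div_eq_of_lt_le
            · have e : (a/b+1)*b = b*(a/b) + b := by ring
              omega
            · have e : (a/b+1+1)*b = b*(a/b) + 2*b := by ring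
              omega
          have e1' : a*(y-b) = b*((a/b)*(y-b)) + (a%b)*(y-b) := by
            calc a*(y-b) = (b*(a/b) + a%b)*(y-b) := by rw [hp]
              _ = b*((a/b)*(y-b)) + (a%b)*(y-b) := by ring
          have hsl : 0 < (a%b)*(y-b) := Nat.mul_pos (by omega) (by omega)
          have hl2 : (a/b)*(y-b) ≤ x-a := by
            refine Nat.le_of_mul_le_mul_left ?_ (show 0 < b by omega)
            omega
          have hu2 : x-a < (a/b)*(y-b) + (y-b) := by
            apply Nat.lt_of_mul_lt_mul_left (a := b)
            have e2 : b*((a/b)*(y-b) + (y-b)) = b*((a/b)*(y-b)) + b*(y-b) := by ring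
            have e3 : (a%b)*(y-b) + (y-b) ≤ b*(y-b) := by
              have h4 : (a%b+1)*(y-b) ≤ b*(y-b) := Nat.mul_le_mul (by omega) le_rfl
              have e5 : (a%b+1)*(y-b) = (a%b)*(y-b) + (y-b) := by ring
              omega
            omega
          have claim2b : (x-a)/(y-b) = a/b := by
            apply Nat.div_eq_of_lt_le
            · exact hl2
            · have e : (a/b+1)*(y-b) = (a/b)*(y-b) + (y-b) := by ring
              omega
          have g2 : dd x a = dd (x-a) a + 1 := dd_sub (by omega) hax'
          have g3 : dd y b = dd (y-b) b + 1 := dd_sub (by omega) hby'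
          have c1 : dd a (x-a) = dd (x-a) a := dd_comm _ _
          have c2 : dd b (y-b) = dd (y-b) b := dd_comm _ _
          exact ⟨by omega, by omega⟩
        · -- 2b ≤ y : then b = 1, y = 2, x = 2a - 1
          have hb1 : b = 1 := by
            have h1 : a*(2*b) ≤ a*y := Nat.mul_le_mul le_rfl hy2
            have h2 : b*x ≤ b*(2*a-1) := Nat.mul_le_mul le_rfl (by omega)
            have e1 : a*(2*b) = 2*(a*b) := by ring
            have e3 : 2*a-1+1 = 2*a := by omega
            have e2 : b*(2*a-1) + b = 2*(a*b) := by
              calc b*(2*a-1) + b = b*(2*a-1) + b*1 := by ring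
                _ = b*(2*a-1+1) := by rw [← Nat.mul_add]
                _ = b*(2*a) := by rw [e3]
                _ = 2*(a*b) := by ring
            omega
          subst hb1
          have hy : y = 2 := by
            have h1 : a*y ≤ a*2 := by omega
            have h2 : a*2 ≤ a*y := Nat.mul_le_mul le_rfl (by omega)
            have h3 : a*y = a*2 := le_antisymm h1 h2
            exact Nat.eq_of_mul_eq_mul_left (by omega) h3
          subst hy
          have hx : x = 2*a - 1 := by omega
          subst hx
          have L : dd (2*a - 1 + 2) (a+1) = a + 2 := by
            have h1 := dd_sub (show 1 ≤ a+1 by omega) (show a+1 < 2*a-1+2 by omega)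
            have e : 2*a-1+2 - (a+1) = a := by omega
            rw [e] at h1
            have h2 : dd a (a+1) = dd (a+1) a := dd_comm _ _
            have h3 := dd_sub (show 1 ≤ a by omega) (show a < a+1 by omega)
            have e2 : a+1-a = 1 := by omega
            rw [e2] at h3
            rw [h1, h2, h3, dd_one_left (by omega)]
          have R : dd (2*a-1) a = a + 1 := by
            have h1 := dd_sub (show 1 ≤ a by omega) (show a < 2*a-1 by omega)
            have e : 2*a-1-a = a-1 := by omega
            rw [e] at h1
            have h2 : dd (a-1) a = dd a (a-1) := dd_comm _ _
            have h3 := dd_sub (show 1 ≤ a-1 by omega) (show a-1 < a by omega)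
            have e2 : a - (a-1) = 1 := by omega
            rw [e2] at h3
            rw [h1, h2, h3, dd_one_left (by omega)]
            omega
          have hdiv : 1/a = 0 := Nat.div_eq_of_lt ha2
          have hd21 : dd 2 1 = 2 := dd_one_right (by omega)
          exact ⟨by omega, by omega⟩
    · -- 2a ≤ x : subtract 1 from both fractions
      have hy2 : 2*b + 1 ≤ y := by
        have h1 : b*(2*a) ≤ b*x := Nat.mul_le_mul le_rfl hx2
        have h2 : b*(2*a) = a*(2*b) := by ring
        have h3 : a*(2*b) < a*y := by omega
        have := Nat.lt_of_mul_lt_mul_left h3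
        omega
      have heq' : a*(y-b) = b*(x-a) + 1 := by
        have e1 : a*(y-b) + a*b = a*y := by rw [← Nat.mul_add]; congr 1; omega
        have e2 : b*(x-a) + b*a = b*x := by rw [← Nat.mul_add]; congr 1; omega
        have e3 : a*b = b*a := Nat.mul_comm a b
        omega
      obtain ⟨I1, I2⟩ := ih a (x-a) b (y-b) (by omega) ha (by omega) hb (by omega) heq'
      have g1 : dd (x+y) (a+b) = dd ((x-a)+(y-b)) (a+b) + 1 := by
        have h1 := dd_sub (show 1 ≤ a+b by omega) (show a+b < x+y by omega)
        have e : x+y-(a+b) = (x-a)+(y-b) := by omega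
        rw [e] at h1; exact h1
      have g2 : dd x a = dd (x-a) a + 1 := dd_sub ha (by omega)
      have g3 : dd y b = dd (y-b) b + 1 := dd_sub hb (by omega)
      exact ⟨by omega, by omega⟩

/-- For Farey neighbors `x/a`, `y/b ≥ 1` (`ay - bx = 1`):
`deg (a+b, x+y)_q = deg (a, x)_q + ⌊b/a + 1⌋` (here `⌊b/a + 1⌋ = b/a + 1`). -/
theorem W_natDegree_farey_left (a x b y : ℕ)
    (ha : 1 ≤ a) (hax : a ≤ x) (hb : 1 ≤ b) (hby : b ≤ y)
    (h : a * y = b * x + 1) :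
    (W (a + b) (x + y)).natDegree = (W a x).natDegree + (b / a + 1) := by
  have copax : Nat.Coprime a x := by
    have h1 : Nat.gcd a x ∣ b * x := Dvd.dvd.mul_left (Nat.gcd_dvd_right a x) b
    have h2 : Nat.gcd a x ∣ b * x + 1 := by
      rw [← h]; exact Dvd.dvd.mul_right (Nat.gcd_dvd_left a x) y
    have h3 := Nat.dvd_sub h2 h1
    have e : b * x + 1 - (b * x) = 1 := by omega
    rw [e] at h3
    exact Nat.dvd_one.mp h3
  have copmed : Nat.Coprime (a + b) (x + y) := by
    have d1 : Nat.gcd (a+b) (x+y) ∣ (a+b) * x :=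
      Dvd.dvd.mul_right (Nat.gcd_dvd_left _ _) x
    have d2 : Nat.gcd (a+b) (x+y) ∣ a * (x+y) :=
      Dvd.dvd.mul_left (Nat.gcd_dvd_right _ _) a
    have e : a * (x+y) = (a+b) * x + 1 := by
      have e1 : a * (x+y) = a*x + a*y := by ring
      have e2 : (a+b) * x = a*x + b*x := by ring
      omega
    rw [e] at d2
    have d3 := Nat.dvd_sub d2 d1
    have e2 : (a+b)*x + 1 - ((a+b)*x) = 1 := by omega
    rw [e2] at d3
    exact Nat.dvd_one.mp d3
  have n1 := nice_natDegree (W_nice ((a+b)+(x+y)) (a+b) (x+y) le_rfl (by omega) (by omega)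
    copmed)
  have n2 := nice_natDegree (W_nice (a+x) a x le_rfl ha (by omega) copax)
  obtain ⟨m1, _⟩ := med_d (a+x+b+y) a x b y le_rfl ha hax hb hby h
  rw [n1, n2, dd_comm (a+b) (x+y), dd_comm a x]
  omega
end

section
/- Let α > 1 and β > 1 (or β = ∞ = 1/0) be Farey neighbors of rational numbers whose Farey sum has negative continued fraction expansion α♯β = [c₁, ..., c_l]⁻. Then c_l − 1 = ⌈N(α)/N(β)⌉, where N(α), N(β) are the numerators of α, β in lowest terms. -/
open Polynomial

lemma ncfDigits_one (x : ℕ) : ncfDigits x 1 = [x] := by rw [ncfDigits]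

lemma ncfDigits_two (x a : ℕ) : ncfDigits x (a + 2) =
    (x + (a + 2) - 1) / (a + 2) ::
      ncfDigits (a + 2) ((x + (a + 2) - 1) / (a + 2) * (a + 2) - x) := by
  rw [ncfDigits]

lemma ncfDigits_ne_nil (x a : ℕ) (h : 1 ≤ a) : ncfDigits x a ≠ [] := by
  match a, h with
  | 1, _ => rw [ncfDigits_one]; simp
  | a + 2, _ => rw [ncfDigits_two]; simp

lemma getLast?_cons_of_ne_nil {c : ℕ} {l : List ℕ} (h : l ≠ []) :
    (c :: l).getLast? = l.getLast? := by
  cases l with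
  | nil => simp at h
  | cons b t => rw [List.getLast?_cons_cons]

lemma ceil_swap (P Q Qs Ps : ℕ) (h : Q * Qs = P * Ps + 1) (hQ : 2 ≤ Q)
    (hQP : Q < P) (hQs : 1 ≤ Qs) (hQsP : Qs + 1 ≤ P) (hPs : 1 ≤ Ps) :
    (Q + Ps - 1) / Ps = (P + Qs - 1) / Qs := by
  set m := (P + Qs - 1) / Qs with hm
  have hA : P ≤ Qs * m := by
    have h1 := Nat.div_add_mod (P + Qs - 1) Qs
    have h2 := Nat.mod_lt (P + Qs - 1) (show 0 < Qs by omega)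
    rw [← hm] at h1
    omega
  have hB : Qs * m ≤ P + Qs - 1 := by
    have h1 := Nat.div_add_mod (P + Qs - 1) Qs
    rw [← hm] at h1
    omega
  have h1 : Q ≤ Ps * m := by
    by_contra hc
    push_neg at hc
    have t1 : Ps * P ≤ Ps * (Qs * m) := Nat.mul_le_mul_left _ hA
    have t2 : (Ps * m + 1) * Qs ≤ Q * Qs := Nat.mul_le_mul_right _ hc
    have hq1 : Qs ≤ 1 := by nlinarith [t1, t2, h]
    have hq1' : Qs = 1 := by omega
    subst hq1'
    have : P ≤ P * Ps := Nat.le_mul_of_pos_right _ hPs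
    omega
  have h2 : Ps * m < Q + Ps := by
    have t3 : Ps * (Qs * m) ≤ Ps * (P + Qs - 1) := Nat.mul_le_mul_left _ hB
    have t4 : Ps * (P + Qs - 1) + Ps = Ps * (P + Qs) := by
      rw [← Nat.mul_succ]
      congr 1
      omega
    have t5 : Qs * (Ps * m) < Qs * (Q + Ps) := by nlinarith [t3, t4, h]
    exact Nat.lt_of_mul_lt_mul_left t5
  have hcomm : m * Ps = Ps * m := Nat.mul_comm _ _
  have hsucc : (m + 1) * Ps = Ps * m + Ps := by ring
  exact Nat.div_eq_of_lt_le (by omega) (by omega)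

lemma ncf_last_aux (Q : ℕ) : ∀ P Qs Ps : ℕ, Q * Qs = P * Ps + 1 → 1 ≤ Q → Q < P →
    1 ≤ Qs → Qs + 1 ≤ P →
    (ncfDigits P Q).getLast? = some ((P + Qs - 1) / Qs) := by
  induction Q using Nat.strong_induction_on with
  | _ Q ih =>
    intro P Qs Ps h hQ1 hQP hQs hQsP
    match Q, hQ1, hQP, h, ih with
    | 1, _, hQP, h, ih =>
      -- base case: Qs = 1
      have hPs0 : Ps = 0 := by
        rcases Nat.eq_zero_or_pos Ps with h0 | h0
        · exact h0
        · have : P ≤ P * Ps := Nat.le_mul_of_pos_right _ h0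
          omega
      subst hPs0
      have hQs1 : Qs = 1 := by omega
      subst hQs1
      rw [ncfDigits_one]
      simp
    | (a + 2), _, hQP, h, ih =>
      set Q := a + 2 with hQdef
      set c := (P + Q - 1) / Q with hc
      -- basic facts about c
      have hc1 : c * Q ≤ P + Q - 1 := Nat.div_mul_le_self _ _
      have hc2 : P ≤ c * Q := by
        have h1 := Nat.div_add_mod (P + Q - 1) Q
        have h2 := Nat.mod_lt (P + Q - 1) (show 0 < Q by omega)
        rw [← hc] at h1
        have : Q * c = c * Q := Nat.mul_comm _ _
        omega
      set R := c * Q - P with hR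
      -- R ≥ 1 : Q does not divide P
      have hR1 : 1 ≤ R := by
        rcases Nat.eq_zero_or_pos R with h0 | h0
        · exfalso
          have hcQ : c * Q = P := by omega
          have d1 : Q ∣ Q * Qs := Dvd.intro _ rfl
          have d2 : Q ∣ P * Ps := ⟨c * Ps, by rw [← hcQ]; ring⟩
          have d3 : Q ∣ 1 := by
            have := Nat.dvd_sub d1 d2
            rw [h] at this
            simpa using this
          have := Nat.le_of_dvd (by norm_num) d3
          omega
        · exact h0
      have hRQ : R + 1 ≤ Q := by omega
      -- Ps bounds
      have hPs1 : 1 ≤ Ps := by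
        rcases Nat.eq_zero_or_pos Ps with h0 | h0
        · exfalso; rw [h0] at h; simp at h
          omega
        · exact h0
      have hPsQ : Ps + 1 ≤ Q := by
        by_contra hcon
        push_neg at hcon
        have : Q * Qs ≤ Q * (P - 1) := Nat.mul_le_mul_left _ (by omega)
        have h2 : P * Q ≤ P * Ps := Nat.mul_le_mul_left _ (by omega)
        nlinarith [this, h2, h]
      -- new dual numerator
      have hcPsQs : Qs ≤ c * Ps := by
        by_contra hcon
        push_neg at hcon
        have t1 : c * Ps * Q + Q ≤ Qs * Q := by
          have : c * Ps + 1 ≤ Qs := hcon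
          calc c * Ps * Q + Q = (c * Ps + 1) * Q := by ring
            _ ≤ Qs * Q := Nat.mul_le_mul_right _ this
        have t2 : P * Ps ≤ c * Q * Ps := Nat.mul_le_mul_right _ hc2
        nlinarith [t1, t2, h]
      set Rs := c * Ps - Qs with hRs
      have hkey : R * Ps = Q * Rs + 1 := by
        have e1 : R * Ps = c * Q * Ps - P * Ps := by
          rw [hR, Nat.sub_mul]
        have e2 : Q * Rs = c * Q * Ps - Q * Qs := by
          rw [hRs, Nat.mul_sub]
          congr 1
          ring
        have t2 : P * Ps ≤ c * Q * Ps := Nat.mul_le_mul_right _ hc2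
        have t3 : Q * Qs ≤ c * Q * Ps := by
          have := Nat.mul_le_mul_left Q hcPsQs
          calc Q * Qs ≤ Q * (c * Ps) := this
            _ = c * Q * Ps := by ring
        omega
      -- apply IH
      have hlast := ih R (by omega) Q Ps Rs hkey hR1 (by omega) hPs1 hPsQ
      rw [ncfDigits_two]
      rw [getLast?_cons_of_ne_nil (ncfDigits_ne_nil _ _ (by rw [← hc, ← hR]; omega))]
      rw [show (P + (a + 2) - 1) / (a + 2) * (a + 2) - P = R by rw [hR, hc]]
      rw [hlast]
      congr 1
      exact ceil_swap P Q Qs Ps h (by omega) hQP hQs hQsP hPs1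

/-- For Farey neighbors `α = x/a > 1` and `β = y/b > 1` (or `β = 1/0`), the last
digit `c_l` of the negative continued fraction expansion of the Farey sum
`(x+y)/(a+b)` satisfies `c_l − 1 = ⌈N(α)/N(β)⌉ = ⌈x/y⌉` (here `⌈x/y⌉ = (x + y - 1)/y`). -/
theorem ncf_last_digit (x a y b : ℕ) (h : a * y = b * x + 1)
    (ha : 1 ≤ a) (hax : a < x)
    (hβ : (1 ≤ b ∧ b < y) ∨ (b = 0 ∧ y = 1)) :
    (ncfDigits (x + y) (a + b)).getLast? = some ((x + y - 1) / y + 1) := by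
  have hy : 1 ≤ y := by rcases hβ with ⟨h1, h2⟩ | ⟨h1, h2⟩ <;> omega
  have hmain : (a + b) * y = (x + y) * b + 1 := by
    calc (a + b) * y = a * y + b * y := by ring
      _ = b * x + 1 + b * y := by rw [h]
      _ = (x + y) * b + 1 := by ring
  have hlt : a + b < x + y := by
    rcases hβ with ⟨h1, h2⟩ | ⟨h1, h2⟩ <;> omega
  have := ncf_last_aux (a + b) (x + y) y b hmain (by omega) hlt hy (by omega)
  rw [this]
  congr 1
  have e1 : x + y + y - 1 = (x + y - 1) + y := by omega
  rw [e1, Nat.add_div_right _ (by omega)]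
end
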